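/- Let A ∈ ℝ^{n×m} have rank-k truncated SVD A_k and let Ã_k be another rank-k matrix with Ã_k = P̃_k A for an orthogonal projection P̃_k onto its column space. Then ‖Ã_k Ã_kᵀ (A_kᵀ)† − A_k‖ ≤ (1 + σ₁(A)/σ_k(A)) ‖A_k − Ã_k‖ in spectral norm. -/

import Mathlib

open Matrix

/-- Moore–Penrose pseudoinverse predicate (the four Penrose conditions). -/
def IsMP {p q : ℕ} (A : Matrix (Fin p) (Fin q) ℝ) (X : Matrix (Fin q) (Fin p) ℝ) : Prop :=
  A * X * A = A ∧ X * A * X = X ∧ (A * X)ᵀ = A * X ∧ (X * A)ᵀ = X * A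

/-- spectral (operator) norm of a matrix, induced by Euclidean vector norms. -/
noncomputable def specNorm {p q : ℕ} (A : Matrix (Fin p) (Fin q) ℝ) : ℝ :=
  ‖LinearMap.toContinuousLinearMap (Matrix.toEuclideanLin A)‖

/-- Euclidean norm of a vector. -/
noncomputable def enorm {p : ℕ} (x : Fin p → ℝ) : ℝ :=
  ‖(WithLp.equiv 2 (Fin p → ℝ)).symm x‖

theorem Matrix.isHermitian_transpose_mul_self {m n α : Type*} [Fintype m] [CommSemiring α]
    [StarRing α] [TrivialStar α] (A : Matrix m n α) : (Aᵀ * A).IsHermitian := by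
  simpa using Matrix.isHermitian_conjTranspose_mul_self A

/-- the `i`-th largest singular value (0-indexed) of a real matrix. -/
noncomputable def sv {p q : ℕ} (A : Matrix (Fin p) (Fin q) ℝ) (i : Fin q) : ℝ :=
  Real.sqrt (((Matrix.isHermitian_transpose_mul_self A).eigenvalues ∘
    Tuple.sort (Matrix.isHermitian_transpose_mul_self A).eigenvalues) i.rev)

section Stmt10Aux

open scoped Matrix.Norms.L2Operator

private lemma specNorm_eq' {p q : ℕ} (A : Matrix (Fin p) (Fin q) ℝ) : specNorm A = ‖A‖ := rfl

private lemma transpose_norm' {p q : ℕ} (A : Matrix (Fin p) (Fin q) ℝ) : ‖Aᵀ‖ = ‖A‖ := by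
  rw [← conjTranspose_eq_transpose_of_trivial, Matrix.l2_opNorm_conjTranspose]

private lemma cstar' {p q : ℕ} (A : Matrix (Fin p) (Fin q) ℝ) : ‖Aᵀ * A‖ = ‖A‖ * ‖A‖ := by
  rw [← conjTranspose_eq_transpose_of_trivial, Matrix.l2_opNorm_conjTranspose_mul_self]

private lemma sum_ite_coe_le' {p : ℕ} (jv : ℕ) (a : ℝ) (ha : 0 ≤ a) :
    (∑ i : Fin p, if (i : ℕ) = jv then a else 0) ≤ a := by
  by_cases h : jv < p
  · rw [Finset.sum_eq_single (⟨jv, h⟩ : Fin p)]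
    · simp
    · intro b _ hb
      simp only [ite_eq_right_iff]
      intro hbv
      exact absurd (Fin.ext hbv) hb
    · simp
  · rw [Finset.sum_eq_zero]
    · exact ha
    · intro i _
      have hi := i.isLt
      have : (i : ℕ) ≠ jv := by omega
      simp [this]

private lemma specNorm_pdiag_le' {p q : ℕ} {S : Matrix (Fin p) (Fin q) ℝ} {c : ℝ} (hc : 0 ≤ c)
    (hoff : ∀ (i : Fin p) (j : Fin q), (i : ℕ) ≠ (j : ℕ) → S i j = 0)
    (hb : ∀ (i : Fin p) (j : Fin q), (i : ℕ) = (j : ℕ) → |S i j| ≤ c) :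
    ‖S‖ ≤ c := by
  rw [Matrix.l2_opNorm_def]
  refine ContinuousLinearMap.opNorm_le_bound _ hc fun x => ?_
  set y : Fin q → ℝ := (WithLp.equiv 2 (Fin q → ℝ)) x with hy
  have happ : ((Matrix.toEuclideanLin.trans LinearMap.toContinuousLinearMap) S) x
      = (WithLp.equiv 2 (Fin p → ℝ)).symm (S.mulVec y) := rfl
  have hsum : ∀ i : Fin p, (S.mulVec y i) ^ 2
      ≤ c ^ 2 * ∑ j : Fin q, (if (i : ℕ) = (j : ℕ) then (y j) ^ 2 else 0) := by
    intro i
    by_cases h : (i : ℕ) < q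
    · have h1 : S.mulVec y i = S i ⟨i, h⟩ * y ⟨i, h⟩ := by
        rw [Matrix.mulVec, dotProduct]
        refine Fintype.sum_eq_single (⟨(i : ℕ), h⟩ : Fin q) (fun j hj => ?_)
        have : (i : ℕ) ≠ (j : ℕ) := fun hv => hj (Fin.ext hv.symm)
        rw [hoff i j this, zero_mul]
      have h2 : (∑ j : Fin q, (if (i : ℕ) = (j : ℕ) then (y j) ^ 2 else 0)) = (y ⟨i, h⟩) ^ 2 := by
        have h2' := Fintype.sum_eq_single (⟨(i : ℕ), h⟩ : Fin q)
          (f := fun j : Fin q => if (i : ℕ) = (j : ℕ) then (y j) ^ 2 else 0)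
          (fun j hj => by
            have : (i : ℕ) ≠ (j : ℕ) := fun hv => hj (Fin.ext hv.symm)
            simp [this])
        simpa using h2'
      rw [h1, h2, mul_pow]
      have hbb := hb i ⟨i, h⟩ rfl
      have h3 : (S i ⟨i, h⟩) ^ 2 ≤ c ^ 2 := by
        rw [← sq_abs]
        exact pow_le_pow_left₀ (abs_nonneg _) hbb 2
      nlinarith [sq_nonneg (y ⟨(i : ℕ), h⟩)]
    · have h1 : S.mulVec y i = 0 := by
        rw [Matrix.mulVec, dotProduct]
        refine Finset.sum_eq_zero fun j _ => ?_
        have hj := j.isLt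
        rw [hoff i j (by omega), zero_mul]
      rw [h1]
      have h4 : (0:ℝ) ≤ ∑ j : Fin q, (if (i : ℕ) = (j : ℕ) then (y j) ^ 2 else 0) :=
        Finset.sum_nonneg fun j _ => by positivity
      nlinarith
  have hxnorm : ‖x‖ = Real.sqrt (∑ j : Fin q, (y j) ^ 2) := by
    rw [EuclideanSpace.norm_eq]
    congr 1
    refine Finset.sum_congr rfl fun j _ => ?_
    rw [Real.norm_eq_abs, sq_abs]
    rfl
  rw [happ]
  have hLnorm : ‖(WithLp.equiv 2 (Fin p → ℝ)).symm (S.mulVec y)‖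
      = Real.sqrt (∑ i : Fin p, (S.mulVec y i) ^ 2) := by
    rw [EuclideanSpace.norm_eq]
    congr 1
    refine Finset.sum_congr rfl fun i _ => ?_
    rw [Real.norm_eq_abs, sq_abs]
    rfl
  rw [hLnorm, hxnorm]
  have hstep : (∑ i : Fin p, (S.mulVec y i) ^ 2) ≤ c ^ 2 * ∑ j : Fin q, (y j) ^ 2 := by
    calc (∑ i : Fin p, (S.mulVec y i) ^ 2)
        ≤ ∑ i : Fin p, c ^ 2 * ∑ j : Fin q, (if (i : ℕ) = (j : ℕ) then (y j) ^ 2 else 0) :=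
          Finset.sum_le_sum fun i _ => hsum i
      _ = c ^ 2 * ∑ j : Fin q, ∑ i : Fin p, (if (i : ℕ) = (j : ℕ) then (y j) ^ 2 else 0) := by
          rw [← Finset.mul_sum, Finset.sum_comm]
      _ ≤ c ^ 2 * ∑ j : Fin q, (y j) ^ 2 := by
          refine mul_le_mul_of_nonneg_left ?_ (by positivity)
          exact Finset.sum_le_sum fun j _ => sum_ite_coe_le' (j : ℕ) _ (sq_nonneg _)
  calc Real.sqrt (∑ i : Fin p, (S.mulVec y i) ^ 2)
      ≤ Real.sqrt (c ^ 2 * ∑ j : Fin q, (y j) ^ 2) := Real.sqrt_le_sqrt hstep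
    _ = c * Real.sqrt (∑ j : Fin q, (y j) ^ 2) := by
        rw [Real.sqrt_mul (by positivity), Real.sqrt_sq hc]

private lemma pdiag_mul' {p q r : ℕ} (A : Matrix (Fin p) (Fin q) ℝ) (B : Matrix (Fin q) (Fin r) ℝ)
    (hA : ∀ (i : Fin p) (j : Fin q), (i : ℕ) ≠ (j : ℕ) → A i j = 0)
    (hB : ∀ (j : Fin q) (l : Fin r), (j : ℕ) ≠ (l : ℕ) → B j l = 0)
    (i : Fin p) (l : Fin r) :
    (A * B) i l =
      if h : (i : ℕ) = (l : ℕ) ∧ (i : ℕ) < q then A i ⟨i, h.2⟩ * B ⟨i, h.2⟩ l else 0 := by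
  rw [Matrix.mul_apply]
  by_cases h : (i : ℕ) = (l : ℕ) ∧ (i : ℕ) < q
  · rw [dif_pos h]
    refine Fintype.sum_eq_single (⟨(i : ℕ), h.2⟩ : Fin q) (fun j hj => ?_)
    have : (i : ℕ) ≠ (j : ℕ) := fun hv => hj (Fin.ext hv.symm)
    rw [hA i j this, zero_mul]
  · rw [dif_neg h]
    refine Finset.sum_eq_zero fun j _ => ?_
    by_cases hij : (i : ℕ) = (j : ℕ)
    · have hjl : (j : ℕ) ≠ (l : ℕ) := by
        intro hv
        exact h ⟨hij.trans hv, by rw [hij]; exact j.isLt⟩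
      rw [hB j l hjl, mul_zero]
    · rw [hA i j hij, zero_mul]

private lemma orth_norm_le_one' {p : ℕ} {U : Matrix (Fin p) (Fin p) ℝ} (hU : Uᵀ * U = 1) :
    ‖U‖ ≤ 1 := by
  have h1 : ‖(1 : Matrix (Fin p) (Fin p) ℝ)‖ ≤ 1 := by
    refine specNorm_pdiag_le' zero_le_one (fun i j hij => ?_) (fun i j hij => ?_)
    · exact Matrix.one_apply_ne fun hh => hij (by rw [hh])
    · have : i = j := Fin.ext hij
      subst this
      simp [Matrix.one_apply_eq]
  have h2 : ‖U‖ * ‖U‖ ≤ 1 := by rw [← cstar' U, hU]; exact h1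
  nlinarith [norm_nonneg U]

private lemma proj_norm_le_one' {p : ℕ} {P : Matrix (Fin p) (Fin p) ℝ} (hs : Pᵀ = P)
    (hi : P * P = P) : ‖P‖ ≤ 1 := by
  have h2 : ‖P‖ * ‖P‖ = ‖P‖ := by rw [← cstar' P, hs, hi]
  nlinarith [norm_nonneg P, sq_nonneg (‖P‖ - 1)]

private lemma mp_unique' {p q : ℕ} {A : Matrix (Fin p) (Fin q) ℝ} {X Y : Matrix (Fin q) (Fin p) ℝ}
    (hX : IsMP A X) (hY : IsMP A Y) : X = Y := by
  obtain ⟨hX1, hX2, hX3, hX4⟩ := hX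
  obtain ⟨hY1, hY2, hY3, hY4⟩ := hY
  have hAX : A * X = A * Y := by
    calc A * X = (A * X)ᵀ := hX3.symm
      _ = Xᵀ * Aᵀ := by rw [Matrix.transpose_mul]
      _ = Xᵀ * (A * Y * A)ᵀ := by rw [hY1]
      _ = Xᵀ * (Aᵀ * (Yᵀ * Aᵀ)) := by rw [Matrix.transpose_mul, Matrix.transpose_mul]
      _ = (Xᵀ * Aᵀ) * (Yᵀ * Aᵀ) := by simp only [Matrix.mul_assoc]
      _ = (A * X)ᵀ * (A * Y)ᵀ := by rw [Matrix.transpose_mul, Matrix.transpose_mul]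
      _ = (A * X) * (A * Y) := by rw [hX3, hY3]
      _ = (A * X * A) * Y := by simp only [Matrix.mul_assoc]
      _ = A * Y := by rw [hX1]
  have hXA : X * A = Y * A := by
    calc X * A = (X * A)ᵀ := hX4.symm
      _ = Aᵀ * Xᵀ := by rw [Matrix.transpose_mul]
      _ = (A * Y * A)ᵀ * Xᵀ := by rw [hY1]
      _ = (Aᵀ * (Yᵀ * Aᵀ)) * Xᵀ := by rw [Matrix.transpose_mul, Matrix.transpose_mul]
      _ = (Aᵀ * Yᵀ) * (Aᵀ * Xᵀ) := by simp only [Matrix.mul_assoc]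
      _ = (Y * A)ᵀ * (X * A)ᵀ := by rw [Matrix.transpose_mul, Matrix.transpose_mul]
      _ = (Y * A) * (X * A) := by rw [hX4, hY4]
      _ = Y * (A * X * A) := by simp only [Matrix.mul_assoc]
      _ = Y * A := by rw [hX1]
  calc X = X * A * X := hX2.symm
    _ = X * (A * Y) := by rw [Matrix.mul_assoc, hAX]
    _ = (X * A) * Y := by rw [Matrix.mul_assoc]
    _ = (Y * A) * Y := by rw [hXA]
    _ = Y := hY2

end Stmt10Aux
section Main

open scoped Matrix.Norms.L2Operator

/-- `‖ÃₖÃₖᵀ(Aₖᵀ)† − Aₖ‖ ≤ (1 + σ₁/σₖ)‖Aₖ − Ãₖ‖`, where `Aₖ` is the optimal rank-`k`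
truncated SVD of `A` and `Ãₖ = P̃ₖA` is rank-`k` with `P̃ₖ` the orthogonal projection onto
its column space. -/
theorem stmt10 {n m k : ℕ} (hk : 0 < k) (hkm : k ≤ m)
    (A : Matrix (Fin n) (Fin m) ℝ)
    (U : Matrix (Fin n) (Fin n) ℝ) (V : Matrix (Fin m) (Fin m) ℝ)
    (S : Matrix (Fin n) (Fin m) ℝ)
    (hU : Uᵀ * U = 1) (hV : Vᵀ * V = 1)
    (hSoff : ∀ (i : Fin n) (j : Fin m), (i : ℕ) ≠ (j : ℕ) → S i j = 0)
    (hSdiag : ∀ (i : Fin n) (j : Fin m), (i : ℕ) = (j : ℕ) → S i j = sv A j)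
    (hA : A = U * S * Vᵀ)
    (Ak : Matrix (Fin n) (Fin m) ℝ)
    (hAkdef : Ak = U * Matrix.of (fun (i : Fin n) (j : Fin m) => if (j : ℕ) < k then S i j else 0) * Vᵀ)
    (hσk : 0 < sv A ⟨k - 1, by omega⟩)
    (Atk : Matrix (Fin n) (Fin m) ℝ) (P : Matrix (Fin n) (Fin n) ℝ)
    (hPsym : Pᵀ = P) (hPidem : P * P = P)
    (hrange : LinearMap.range P.mulVecLin = LinearMap.range Atk.mulVecLin)
    (hAtk : Atk = P * A) (hrank : Atk.rank = k)
    (X : Matrix (Fin n) (Fin m) ℝ) (hX : IsMP Akᵀ X) :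
    specNorm (Atk * Atkᵀ * X - Ak)
      ≤ (1 + sv A ⟨0, by omega⟩ / sv A ⟨k - 1, by omega⟩) * specNorm (Ak - Atk) := by
  classical
  have hm : 0 < m := lt_of_lt_of_le hk hkm
  have hkn : k ≤ n := by
    have h := Matrix.rank_le_card_height Atk
    rw [hrank, Fintype.card_fin] at h
    exact h
  -- singular value facts
  have sv_anti : ∀ i j : Fin m, i ≤ j → sv A j ≤ sv A i := by
    intro i j hij
    simp only [sv]
    refine Real.sqrt_le_sqrt ?_
    refine Tuple.monotone_sort _ ?_
    rw [Fin.le_def, Fin.val_rev, Fin.val_rev]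
    have := Fin.le_def.mp hij
    omega
  have sv_nonneg : ∀ j : Fin m, 0 ≤ sv A j := by
    intro j; simp only [sv]; exact Real.sqrt_nonneg _
  have svk_le : ∀ j : Fin m, (j : ℕ) < k → sv A ⟨k - 1, by omega⟩ ≤ sv A j := by
    intro j hj
    refine sv_anti j ⟨k - 1, by omega⟩ ?_
    rw [Fin.le_def]
    exact (by omega : (j : ℕ) ≤ k - 1)
  have sv_pos : ∀ j : Fin m, (j : ℕ) < k → 0 < sv A j :=
    fun j hj => lt_of_lt_of_le hσk (svk_le j hj)
  have sv_le1 : ∀ j : Fin m, sv A j ≤ sv A ⟨0, hm⟩ := by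
    intro j
    refine sv_anti ⟨0, hm⟩ j ?_
    rw [Fin.le_def]
    exact Nat.zero_le _
  -- matrices
  set Sk : Matrix (Fin n) (Fin m) ℝ :=
    Matrix.of (fun (i : Fin n) (j : Fin m) => if (j : ℕ) < k then S i j else 0) with hSkdef
  set T : Matrix (Fin n) (Fin m) ℝ :=
    Matrix.of (fun (i : Fin n) (j : Fin m) =>
      if (i : ℕ) = (j : ℕ) ∧ (j : ℕ) < k then (sv A j)⁻¹ else 0) with hTdef
  set Dm : Matrix (Fin m) (Fin m) ℝ :=
    Matrix.of (fun (j j' : Fin m) =>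
      if (j : ℕ) = (j' : ℕ) ∧ (j : ℕ) < k then (1 : ℝ) else 0) with hDmdef
  set Dn : Matrix (Fin n) (Fin n) ℝ :=
    Matrix.of (fun (i i' : Fin n) =>
      if (i : ℕ) = (i' : ℕ) ∧ (i : ℕ) < k then (1 : ℝ) else 0) with hDndef
  have hAk : Ak = U * Sk * Vᵀ := hAkdef
  set X0 : Matrix (Fin n) (Fin m) ℝ := U * T * Vᵀ with hX0def
  -- off-diagonal lemmas
  have hSkoff : ∀ (i : Fin n) (j : Fin m), (i : ℕ) ≠ (j : ℕ) → Sk i j = 0 := by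
    intro i j h
    rw [hSkdef]
    simp only [Matrix.of_apply]
    rw [hSoff i j h, ite_self]
  have hSkToff : ∀ (j : Fin m) (i : Fin n), (j : ℕ) ≠ (i : ℕ) → Skᵀ j i = 0 := by
    intro j i h
    rw [Matrix.transpose_apply]
    exact hSkoff i j (Ne.symm h)
  have hToff : ∀ (i : Fin n) (j : Fin m), (i : ℕ) ≠ (j : ℕ) → T i j = 0 := by
    intro i j h
    rw [hTdef]
    simp only [Matrix.of_apply]
    rw [if_neg fun hc => h hc.1]
  have hDmoff : ∀ (a b : Fin m), (a : ℕ) ≠ (b : ℕ) → Dm a b = 0 := by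
    intro a b h
    rw [hDmdef]
    simp only [Matrix.of_apply]
    rw [if_neg fun hc => h hc.1]
  have hDnoff : ∀ (a b : Fin n), (a : ℕ) ≠ (b : ℕ) → Dn a b = 0 := by
    intro a b h
    rw [hDndef]
    simp only [Matrix.of_apply]
    rw [if_neg fun hc => h hc.1]
  -- product identities
  have hD1 : Skᵀ * T = Dm := by
    ext j j'
    rw [pdiag_mul' Skᵀ T hSkToff hToff, hDmdef]
    simp only [Matrix.of_apply]
    by_cases h : (j : ℕ) = (j' : ℕ) ∧ (j : ℕ) < k
    · have hjn : (j : ℕ) < n := lt_of_lt_of_le h.2 hkn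
      rw [dif_pos ⟨h.1, hjn⟩, if_pos h]
      have e1 : Skᵀ j ⟨(j : ℕ), hjn⟩ = sv A j := by
        rw [Matrix.transpose_apply, hSkdef]
        simp only [Matrix.of_apply]
        rw [if_pos h.2]
        exact hSdiag ⟨(j : ℕ), hjn⟩ j rfl
      have e2 : T ⟨(j : ℕ), hjn⟩ j' = (sv A j')⁻¹ := by
        rw [hTdef]
        simp only [Matrix.of_apply]
        rw [if_pos ⟨h.1, h.1 ▸ h.2⟩]
      have hsv : sv A j' = sv A j := congrArg (sv A) (Fin.ext h.1.symm)
      rw [e1, e2, hsv, mul_inv_cancel₀ (ne_of_gt (sv_pos j h.2))]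
    · rw [if_neg h]
      by_cases h2 : (j : ℕ) = (j' : ℕ) ∧ (j : ℕ) < n
      · rw [dif_pos h2]
        have hnk : ¬ (j : ℕ) < k := fun hc => h ⟨h2.1, hc⟩
        have e1 : Skᵀ j ⟨(j : ℕ), h2.2⟩ = 0 := by
          rw [Matrix.transpose_apply, hSkdef]
          simp only [Matrix.of_apply]
          rw [if_neg hnk]
        rw [e1, zero_mul]
      · rw [dif_neg h2]
  have hD2 : T * Skᵀ = Dn := by
    ext i i'
    rw [pdiag_mul' T Skᵀ hToff hSkToff, hDndef]
    simp only [Matrix.of_apply]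
    by_cases h : (i : ℕ) = (i' : ℕ) ∧ (i : ℕ) < k
    · have him : (i : ℕ) < m := lt_of_lt_of_le h.2 hkm
      rw [dif_pos ⟨h.1, him⟩, if_pos h]
      have e1 : T i ⟨(i : ℕ), him⟩ = (sv A ⟨(i : ℕ), him⟩)⁻¹ := by
        simp [hTdef, h.2]
      have e2 : Skᵀ ⟨(i : ℕ), him⟩ i' = sv A ⟨(i : ℕ), him⟩ := by
        rw [Matrix.transpose_apply, hSkdef]
        simp only [Matrix.of_apply]
        rw [if_pos h.2]
        exact hSdiag i' ⟨(i : ℕ), him⟩ h.1.symm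
      rw [e1, e2, inv_mul_cancel₀ (ne_of_gt (sv_pos ⟨(i : ℕ), him⟩ h.2))]
    · rw [if_neg h]
      by_cases h2 : (i : ℕ) = (i' : ℕ) ∧ (i : ℕ) < m
      · rw [dif_pos h2]
        have hnk : ¬ (i : ℕ) < k := fun hc => h ⟨h2.1, hc⟩
        have e1 : T i ⟨(i : ℕ), h2.2⟩ = 0 := by
          rw [hTdef]
          simp only [Matrix.of_apply]
          rw [if_neg fun hc => hnk hc.2]
        rw [e1, zero_mul]
      · rw [dif_neg h2]
  have hDmSk : Dm * Skᵀ = Skᵀ := by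
    ext j i
    rw [pdiag_mul' Dm Skᵀ hDmoff hSkToff]
    by_cases h : (j : ℕ) = (i : ℕ)
    · rw [dif_pos ⟨h, j.isLt⟩]
      have hj : (⟨(j : ℕ), j.isLt⟩ : Fin m) = j := Fin.ext rfl
      rw [hj]
      by_cases hk' : (j : ℕ) < k
      · have e1 : Dm j j = 1 := by simp [hDmdef, hk']
        rw [e1, one_mul]
      · have e1 : Dm j j = 0 := by
          rw [hDmdef]
          simp only [Matrix.of_apply]
          rw [if_neg fun hc => hk' hc.2]
        have e2 : Skᵀ j i = 0 := by
          rw [Matrix.transpose_apply, hSkdef]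
          simp only [Matrix.of_apply]
          rw [if_neg hk']
        rw [e1, e2, zero_mul]
    · rw [dif_neg fun hc => h hc.1, hSkToff j i h]
  have hDnT : Dn * T = T := by
    ext i j
    rw [pdiag_mul' Dn T hDnoff hToff]
    by_cases h : (i : ℕ) = (j : ℕ)
    · rw [dif_pos ⟨h, i.isLt⟩]
      have hi : (⟨(i : ℕ), i.isLt⟩ : Fin n) = i := Fin.ext rfl
      rw [hi]
      by_cases hk' : (i : ℕ) < k
      · have e1 : Dn i i = 1 := by simp [hDndef, hk']
        rw [e1, one_mul]
      · have e1 : Dn i i = 0 := by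
          rw [hDndef]
          simp only [Matrix.of_apply]
          rw [if_neg fun hc => hk' hc.2]
        have e2 : T i j = 0 := by
          rw [hTdef]
          simp only [Matrix.of_apply]
          rw [if_neg fun hc => hk' (lt_of_eq_of_lt hc.1 hc.2)]
        rw [e1, e2, zero_mul]
    · rw [dif_neg fun hc => h hc.1, hToff i j h]
  -- symmetry of Dm and Dn
  have hDmsym : Dmᵀ = Dm := by
    ext a b
    rw [Matrix.transpose_apply, hDmdef]
    simp only [Matrix.of_apply]
    split_ifs with h1 h2 h2 <;> first | rfl | omega
  have hDnsym : Dnᵀ = Dn := by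
    ext a b
    rw [Matrix.transpose_apply, hDndef]
    simp only [Matrix.of_apply]
    split_ifs with h1 h2 h2 <;> first | rfl | omega
  -- orthogonality
  have hUUt : U * Uᵀ = 1 := mul_eq_one_comm.mp hU
  have hVVt : V * Vᵀ = 1 := mul_eq_one_comm.mp hV
  have hAkT : Akᵀ = V * Skᵀ * Uᵀ := by
    rw [hAk]
    simp only [Matrix.transpose_mul, Matrix.transpose_transpose, Matrix.mul_assoc]
  -- products with Ak
  have hprod1 : Akᵀ * X0 = V * (Skᵀ * T) * Vᵀ := by
    rw [hAkT, hX0def]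
    simp only [Matrix.mul_assoc]
    rw [← Matrix.mul_assoc Uᵀ U (T * Vᵀ), hU, Matrix.one_mul]
  have hprod2 : X0 * Akᵀ = U * (T * Skᵀ) * Uᵀ := by
    rw [hAkT, hX0def]
    simp only [Matrix.mul_assoc]
    rw [← Matrix.mul_assoc Vᵀ V (Skᵀ * Uᵀ), hV, Matrix.one_mul]
  have hMP1 : Akᵀ * X0 * Akᵀ = Akᵀ := by
    calc Akᵀ * X0 * Akᵀ = (V * (Skᵀ * T) * Vᵀ) * (V * Skᵀ * Uᵀ) := by rw [hprod1, hAkT]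
      _ = V * ((Skᵀ * T) * Skᵀ) * Uᵀ := by
          simp only [Matrix.mul_assoc]
          rw [← Matrix.mul_assoc Vᵀ V (Skᵀ * Uᵀ), hV, Matrix.one_mul]
      _ = V * Skᵀ * Uᵀ := by rw [hD1, hDmSk]
      _ = Akᵀ := hAkT.symm
  have hMP2 : X0 * Akᵀ * X0 = X0 := by
    calc X0 * Akᵀ * X0 = (U * (T * Skᵀ) * Uᵀ) * (U * T * Vᵀ) := by rw [hprod2, hX0def]
      _ = U * ((T * Skᵀ) * T) * Vᵀ := by
          simp only [Matrix.mul_assoc]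
          rw [← Matrix.mul_assoc Uᵀ U (T * Vᵀ), hU, Matrix.one_mul]
      _ = U * T * Vᵀ := by rw [hD2, hDnT]
      _ = X0 := hX0def.symm
  have hMP3 : (Akᵀ * X0)ᵀ = Akᵀ * X0 := by
    rw [hprod1, hD1]
    calc (V * Dm * Vᵀ)ᵀ = V * Dmᵀ * Vᵀ := by
          simp only [Matrix.transpose_mul, Matrix.transpose_transpose, Matrix.mul_assoc]
      _ = V * Dm * Vᵀ := by rw [hDmsym]
  have hMP4 : (X0 * Akᵀ)ᵀ = X0 * Akᵀ := by
    rw [hprod2, hD2]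
    calc (U * Dn * Uᵀ)ᵀ = U * Dnᵀ * Uᵀ := by
          simp only [Matrix.transpose_mul, Matrix.transpose_transpose, Matrix.mul_assoc]
      _ = U * Dn * Uᵀ := by rw [hDnsym]
  have hMP0 : IsMP Akᵀ X0 := ⟨hMP1, hMP2, hMP3, hMP4⟩
  have hXX0 : X = X0 := mp_unique' hX hMP0
  -- norm bounds
  have hnormU : ‖U‖ ≤ 1 := orth_norm_le_one' hU
  have hnormVt : ‖Vᵀ‖ ≤ 1 := orth_norm_le_one' (by rw [Matrix.transpose_transpose]; exact hVVt)
  have hSnorm : ‖S‖ ≤ sv A ⟨0, hm⟩ := by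
    refine specNorm_pdiag_le' (sv_nonneg _) hSoff (fun i j hij => ?_)
    rw [hSdiag i j hij, abs_of_nonneg (sv_nonneg j)]
    exact sv_le1 j
  have hAnorm : ‖A‖ ≤ sv A ⟨0, hm⟩ := by
    calc ‖A‖ = ‖U * S * Vᵀ‖ := by rw [hA]
      _ ≤ ‖U * S‖ * ‖Vᵀ‖ := Matrix.l2_opNorm_mul _ _
      _ ≤ ‖U * S‖ * 1 := mul_le_mul_of_nonneg_left hnormVt (norm_nonneg _)
      _ = ‖U * S‖ := mul_one _
      _ ≤ ‖U‖ * ‖S‖ := Matrix.l2_opNorm_mul _ _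
      _ ≤ 1 * ‖S‖ := mul_le_mul_of_nonneg_right hnormU (norm_nonneg _)
      _ = ‖S‖ := one_mul _
      _ ≤ sv A ⟨0, hm⟩ := hSnorm
  have hTnorm : ‖T‖ ≤ (sv A ⟨k - 1, by omega⟩)⁻¹ := by
    refine specNorm_pdiag_le' (inv_nonneg.mpr hσk.le) hToff (fun i j hij => ?_)
    rw [hTdef]
    simp only [Matrix.of_apply]
    by_cases hjk : (j : ℕ) < k
    · rw [if_pos ⟨hij, hjk⟩, abs_of_nonneg (inv_nonneg.mpr (sv_nonneg j))]
      exact inv_anti₀ hσk (svk_le j hjk)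
    · rw [if_neg fun hc => hjk hc.2, abs_zero]
      exact inv_nonneg.mpr hσk.le
  have hX0norm : ‖X0‖ ≤ (sv A ⟨k - 1, by omega⟩)⁻¹ := by
    calc ‖X0‖ = ‖U * T * Vᵀ‖ := by rw [hX0def]
      _ ≤ ‖U * T‖ * ‖Vᵀ‖ := Matrix.l2_opNorm_mul _ _
      _ ≤ ‖U * T‖ * 1 := mul_le_mul_of_nonneg_left hnormVt (norm_nonneg _)
      _ = ‖U * T‖ := mul_one _
      _ ≤ ‖U‖ * ‖T‖ := Matrix.l2_opNorm_mul _ _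
      _ ≤ 1 * ‖T‖ := mul_le_mul_of_nonneg_right hnormU (norm_nonneg _)
      _ = ‖T‖ := one_mul _
      _ ≤ (sv A ⟨k - 1, by omega⟩)⁻¹ := hTnorm
  have hAtknorm : ‖Atk‖ ≤ sv A ⟨0, hm⟩ := by
    calc ‖Atk‖ = ‖P * A‖ := by rw [hAtk]
      _ ≤ ‖P‖ * ‖A‖ := Matrix.l2_opNorm_mul _ _
      _ ≤ 1 * sv A ⟨0, hm⟩ :=
          mul_le_mul (proj_norm_le_one' hPsym hPidem) hAnorm (norm_nonneg _) zero_le_one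
      _ = sv A ⟨0, hm⟩ := one_mul _
  have hQnorm : ‖Akᵀ * X‖ ≤ 1 := by
    have hidem : (Akᵀ * X) * (Akᵀ * X) = Akᵀ * X := by
      calc (Akᵀ * X) * (Akᵀ * X) = (Akᵀ * X * Akᵀ) * X := by simp only [Matrix.mul_assoc]
        _ = Akᵀ * X := by rw [hX.1]
    exact proj_norm_le_one' hX.2.2.1 hidem
  -- key algebraic identity
  have hAkX : Ak * (Akᵀ * X) = Ak := by
    calc Ak * (Akᵀ * X) = Akᵀᵀ * (Akᵀ * X)ᵀ := by
          rw [hX.2.2.1, Matrix.transpose_transpose]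
      _ = (Akᵀ * X * Akᵀ)ᵀ := by rw [← Matrix.transpose_mul]
      _ = Akᵀᵀ := by rw [hX.1]
      _ = Ak := Matrix.transpose_transpose Ak
  have hdecomp : Atk * Atkᵀ * X - Ak
      = Atk * (Atk - Ak)ᵀ * X + (Atk - Ak) * (Akᵀ * X) := by
    simp only [Matrix.transpose_sub, Matrix.sub_mul, Matrix.mul_sub, Matrix.mul_assoc, hAkX]
    abel
  -- final assembly
  rw [specNorm_eq', specNorm_eq', hdecomp]
  have hE0 : (0:ℝ) ≤ ‖Ak - Atk‖ := norm_nonneg _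
  have hEtrans : ‖(Atk - Ak)ᵀ‖ = ‖Ak - Atk‖ := by
    rw [transpose_norm', norm_sub_rev]
  have hEswap : ‖Atk - Ak‖ = ‖Ak - Atk‖ := norm_sub_rev _ _
  have b1 : ‖Atk * (Atk - Ak)ᵀ * X‖
      ≤ sv A ⟨0, hm⟩ * ‖Ak - Atk‖ * (sv A ⟨k - 1, by omega⟩)⁻¹ := by
    calc ‖Atk * (Atk - Ak)ᵀ * X‖ ≤ ‖Atk * (Atk - Ak)ᵀ‖ * ‖X‖ := Matrix.l2_opNorm_mul _ _
      _ ≤ (‖Atk‖ * ‖(Atk - Ak)ᵀ‖) * ‖X‖ :=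
          mul_le_mul_of_nonneg_right (Matrix.l2_opNorm_mul _ _) (norm_nonneg _)
      _ ≤ (sv A ⟨0, hm⟩ * ‖Ak - Atk‖) * (sv A ⟨k - 1, by omega⟩)⁻¹ := by
          have hXb : ‖X‖ ≤ (sv A ⟨k - 1, by omega⟩)⁻¹ := by rw [hXX0]; exact hX0norm
          refine mul_le_mul ?_ hXb (norm_nonneg _) (mul_nonneg (sv_nonneg _) hE0)
          rw [hEtrans]
          exact mul_le_mul_of_nonneg_right hAtknorm hE0
  have b2 : ‖(Atk - Ak) * (Akᵀ * X)‖ ≤ ‖Ak - Atk‖ := by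
    calc ‖(Atk - Ak) * (Akᵀ * X)‖ ≤ ‖Atk - Ak‖ * ‖Akᵀ * X‖ := Matrix.l2_opNorm_mul _ _
      _ ≤ ‖Ak - Atk‖ * 1 := by
          rw [hEswap]
          exact mul_le_mul_of_nonneg_left hQnorm hE0
      _ = ‖Ak - Atk‖ := mul_one _
  calc ‖Atk * (Atk - Ak)ᵀ * X + (Atk - Ak) * (Akᵀ * X)‖
      ≤ ‖Atk * (Atk - Ak)ᵀ * X‖ + ‖(Atk - Ak) * (Akᵀ * X)‖ := norm_add_le _ _
    _ ≤ sv A ⟨0, hm⟩ * ‖Ak - Atk‖ * (sv A ⟨k - 1, by omega⟩)⁻¹ + ‖Ak - Atk‖ :=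
        add_le_add b1 b2
    _ = (1 + sv A ⟨0, hm⟩ / sv A ⟨k - 1, by omega⟩) * ‖Ak - Atk‖ := by
        rw [div_eq_mul_inv]; ring

end Main
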